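/- Bernstein inequality for sums of squares: let N ≥ 1, v : Fin N → Fin N → ℝ be symmetric (modeling the Hessian ∂ᵢ∂ⱼv), p : Fin N → ℝ (modeling ∇v), w := Σᵢ pᵢ², c ∈ ℝ, and m ∈ (0,1). Then Σ_{i,j} (v i j)² + c·(Σ_{i,j} pᵢ pⱼ v i j - w·Σᵢ v i i) ≥ -((c²/4)·(N-1))·w². (This is the algebraic heart of Bénilan's trick with c = (m-1)φ'/φ.) -/
import Mathlib

theorem bernstein_trick (N : ℕ) (hN : 1 ≤ N) (v : Fin N → Fin N → ℝ)
    (hsym : ∀ i j, v i j = v j i) (p : Fin N → ℝ) (c m : ℝ)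
    (hm1 : 0 < m) (hm2 : m < 1) (w : ℝ) (hw : w = ∑ i, p i ^ 2) :
    ∑ i, ∑ j, (v i j) ^ 2 +
        c * ((∑ i, ∑ j, p i * p j * v i j) - w * ∑ i, v i i) ≥
      -(c ^ 2 / 4 * ((N : ℝ) - 1)) * w ^ 2 := by
  set e : Fin N → Fin N → ℝ := fun i j => if i = j then p i ^ 2 - w else p i * p j with he
  have hsum : ∑ i, ∑ j, (-(c ^ 2 / 4) * e i j ^ 2) ≤
      ∑ i, ∑ j, (v i j ^ 2 + c * (v i j * e i j)) := by
    apply Finset.sum_le_sum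
    intro i _
    apply Finset.sum_le_sum
    intro j _
    nlinarith [sq_nonneg (v i j + c / 2 * e i j)]
  have hA : ∀ i, ∑ j, v i j * e i j = (∑ j, p i * p j * v i j) - w * v i i := by
    intro i
    have h1 : ∀ j, v i j * e i j = p i * p j * v i j - (if j = i then w * v i i else 0) := by
      intro j
      by_cases h : i = j
      · subst h; simp [he]; ring
      · simp [he, h, Ne.symm h]; ring
    rw [Finset.sum_congr rfl fun j _ => h1 j, Finset.sum_sub_distrib,
      Finset.sum_ite_eq' Finset.univ i (fun _ => w * v i i)]
    simp
  have hB : ∀ i, ∑ j, e i j ^ 2 = w ^ 2 - w * p i ^ 2 := by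
    intro i
    have h1 : ∀ j, e i j ^ 2 = p i ^ 2 * p j ^ 2 +
        (if j = i then (p i ^ 2 - w) ^ 2 - p i ^ 2 * p i ^ 2 else 0) := by
      intro j
      by_cases h : i = j
      · subst h; simp [he]
      · simp [he, h, Ne.symm h]
        ring
    rw [Finset.sum_congr rfl fun j _ => h1 j, Finset.sum_add_distrib,
      Finset.sum_ite_eq' Finset.univ i (fun _ => (p i ^ 2 - w) ^ 2 - p i ^ 2 * p i ^ 2)]
    rw [← Finset.mul_sum, ← hw]
    simp
    ring
  have hR : ∑ i, ∑ j, (-(c ^ 2 / 4) * e i j ^ 2) = -(c ^ 2 / 4 * ((N : ℝ) - 1)) * w ^ 2 := by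
    have : ∀ i : Fin N, ∑ j, (-(c ^ 2 / 4) * e i j ^ 2) = -(c ^ 2 / 4) * (w ^ 2 - w * p i ^ 2) := by
      intro i
      rw [← Finset.mul_sum, hB i]
    rw [Finset.sum_congr rfl fun i _ => this i, ← Finset.mul_sum, Finset.sum_sub_distrib,
      Finset.sum_const, ← Finset.mul_sum, ← hw]
    simp
    ring
  have hL : ∑ i, ∑ j, (v i j ^ 2 + c * (v i j * e i j)) =
      ∑ i, ∑ j, (v i j) ^ 2 + c * ((∑ i, ∑ j, p i * p j * v i j) - w * ∑ i, v i i) := by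
    have : ∀ i : Fin N, ∑ j, (v i j ^ 2 + c * (v i j * e i j)) =
        ∑ j, v i j ^ 2 + c * ((∑ j, p i * p j * v i j) - w * v i i) := by
      intro i
      rw [Finset.sum_add_distrib, ← Finset.mul_sum, hA i]
    rw [Finset.sum_congr rfl fun i _ => this i, Finset.sum_add_distrib, ← Finset.mul_sum,
      Finset.sum_sub_distrib, ← Finset.mul_sum]
  rw [← hL, ← hR]
  exact hsum
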